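/- The Laplace mechanism is ε-DP: if f : datasets → ℝ has sensitivity Δ (|f(D) − f(D')| ≤ Δ for all neighboring D, D'), then releasing f(D) + η, where η has Laplace density (ε/(2Δ)) · exp(−ε|x|/Δ), satisfies ε-differential privacy. -/

import Mathlib

open MeasureTheory ENNReal

/-- `M` is an `ε`-differentially private mechanism with respect to the
neighboring relation `neighbor`. -/
def IsDP {D X : Type*} [MeasurableSpace X] (neighbor : D → D → Prop)
    (M : D → Measure X) (ε : ℝ) : Prop :=
  ∀ d d', neighbor d d' → ∀ O : Set X, MeasurableSet O →
    M d O ≤ ENNReal.ofReal (Real.exp ε) * M d' O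

theorem laplace_mechanism_DP {D : Type*}
    (neighbor : D → D → Prop) (f : D → ℝ) (Δ ε : ℝ) (hΔ : 0 < Δ) (hε : 0 < ε)
    (hsens : ∀ d d', neighbor d d' → |f d - f d'| ≤ Δ)
    (η : Measure ℝ)
    (hη : η = volume.withDensity
      (fun x => ENNReal.ofReal ((ε / (2 * Δ)) * Real.exp (-(ε * |x|) / Δ)))) :
    IsDP neighbor (fun d => η.map (fun x => f d + x)) ε := by
  intro d d' hdd' O hO
  subst hη
  set g : ℝ → ℝ→ ℝ≥0∞ := fun c x =>
    ENNReal.ofReal ((ε / (2 * Δ)) * Real.exp (-(ε * |x - c|) / Δ)) with hg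
  have hmeas : ∀ c : ℝ, Measurable (fun x : ℝ =>
      ENNReal.ofReal ((ε / (2 * Δ)) * Real.exp (-(ε * |x - c|) / Δ))) := by
    intro c
    exact ((measurable_id.sub measurable_const).abs.const_mul ε).neg.div_const Δ
      |>.exp.const_mul _ |>.ennreal_ofReal
  have key : ∀ c : ℝ,
      ((volume.withDensity
        (fun x => ENNReal.ofReal ((ε / (2 * Δ)) * Real.exp (-(ε * |x|) / Δ)))).map
        (fun x => c + x)) O = ∫⁻ y in O, g c y := by
    intro c
    rw [Measure.map_apply (measurable_const_add c) hO,
      withDensity_apply _ (hO.preimage (measurable_const_add c))]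
    have mp : MeasurePreserving (fun x : ℝ => c + x) volume volume :=
      measurePreserving_add_left volume c
    have emb : MeasurableEmbedding (fun x : ℝ => c + x) :=
      (MeasurableEquiv.addLeft c).measurableEmbedding
    have := mp.setLIntegral_comp_preimage_emb emb (g c) O
    rw [← this]
    refine setLIntegral_congr_fun ((hO.preimage (measurable_const_add c)))
      (fun x _ => ?_)
    simp [hg, add_sub_cancel_left]
  simp only [key]
  calc ∫⁻ y in O, g (f d) y
      ≤ ∫⁻ y in O, ENNReal.ofReal (Real.exp ε) * g (f d') y := by
        refine lintegral_mono fun y => ?_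
        simp only [hg, ← ENNReal.ofReal_mul (Real.exp_nonneg ε)]
        refine ENNReal.ofReal_le_ofReal ?_
        rw [← mul_assoc, mul_comm (Real.exp ε), mul_assoc, ← Real.exp_add]
        have hc : 0 ≤ ε / (2 * Δ) := by positivity
        refine mul_le_mul_of_nonneg_left (Real.exp_le_exp.2 ?_) hc
        have h1 : |y - f d'| ≤ |y - f d| + Δ := by
          have := hsens d d' hdd'
          have h2 : |y - f d'| ≤ |y - f d| + |f d - f d'| := by
            have := abs_sub_le y (f d) (f d')
            simpa using this
          linarith
        rw [div_le_iff₀ hΔ] at *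
        have h3 : ε * |y - f d'| ≤ ε * (|y - f d| + Δ) :=
          mul_le_mul_of_nonneg_left h1 hε.le
        have h4 : (ε + -(ε * |y - f d'|) / Δ) * Δ = ε * Δ - ε * |y - f d'| := by
          field_simp
          ring
        rw [h4]
        nlinarith
    _ = ENNReal.ofReal (Real.exp ε) * ∫⁻ y in O, g (f d') y := by
        rw [lintegral_const_mul _ (hmeas (f d'))]
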